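/- Let X ∈ ℝ^{n×n} and let a, b, c ∈ ℝ with c > 0. Then X·(aI + b·XᵀX)·(I + c·XᵀX)⁻¹ = (b/c)·X + (a − b/c)·X·(I + c·XᵀX)⁻¹. In particular, if W is any invertible matrix with WᵀW = I + c·XᵀX (e.g., the Cholesky factor), then X·(aI + b·XᵀX)·(I + c·XᵀX)⁻¹ = (b/c)·X + (a − b/c)·(X·W⁻¹)·W⁻ᵀ. -/

import Mathlib

open Matrix

/-- For `X ∈ ℝ^{n×n}` and `c > 0`,
`X (aI + b XᵀX)(I + c XᵀX)⁻¹ = (b/c) X + (a - b/c) X (I + c XᵀX)⁻¹`, and for any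
invertible `W` with `WᵀW = I + c XᵀX` this also equals
`(b/c) X + (a - b/c) (X W⁻¹) W⁻ᵀ`. -/
theorem qdwh_cholesky_identity {n : ℕ} (X : Matrix (Fin n) (Fin n) ℝ)
    (a b c : ℝ) (hc : 0 < c) :
    X * (a • (1 : Matrix (Fin n) (Fin n) ℝ) + b • (Xᵀ * X)) *
        (1 + c • (Xᵀ * X))⁻¹ =
      (b / c) • X + (a - b / c) • (X * (1 + c • (Xᵀ * X))⁻¹) ∧
    ∀ W : Matrix (Fin n) (Fin n) ℝ, IsUnit W.det → Wᵀ * W = 1 + c • (Xᵀ * X) →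
      X * (a • (1 : Matrix (Fin n) (Fin n) ℝ) + b • (Xᵀ * X)) *
          (1 + c • (Xᵀ * X))⁻¹ =
        (b / c) • X + (a - b / c) • ((X * W⁻¹) * (W⁻¹)ᵀ) := by
  set M : Matrix (Fin n) (Fin n) ℝ := 1 + c • (Xᵀ * X) with hM
  have hMpd : M.PosDef := by
    refine Matrix.PosDef.add_posSemidef Matrix.PosDef.one ?_
    have h := Matrix.posSemidef_conjTranspose_mul_self X
    refine ⟨?_, fun x => ?_⟩
    · unfold Matrix.IsHermitian
      rw [conjTranspose_smul]
      simp [h.1.eq]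
    · have := h.2 x
      have e : (x.sum fun i xi => x.sum fun j xj => star xi * (c • (Xᵀ * X)) i j * xj)
          = c * (x.sum fun i xi => x.sum fun j xj => star xi * (Xᴴ * X) i j * xj) := by
        simp only [Finsupp.sum, Finset.mul_sum, Matrix.smul_apply, smul_eq_mul,
          conjTranspose_eq_transpose_of_trivial]
        refine Finset.sum_congr rfl fun i _ => Finset.sum_congr rfl fun j _ => ?_
        ring
      rw [e]
      exact mul_nonneg hc.le this
  have hMunit : IsUnit M.det := isUnit_iff_isUnit_det _ |>.1 hMpd.isUnit
  have hMM : M * M⁻¹ = 1 := Matrix.mul_nonsing_inv _ hMunit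
  have hsplit : a • (1 : Matrix (Fin n) (Fin n) ℝ) + b • (Xᵀ * X)
      = (b / c) • M + (a - b / c) • 1 := by
    rw [hM, smul_add, smul_smul, div_mul_cancel₀ _ hc.ne']
    module
  have key : X * (a • (1 : Matrix (Fin n) (Fin n) ℝ) + b • (Xᵀ * X)) * M⁻¹
      = (b / c) • X + (a - b / c) • (X * M⁻¹) := by
    rw [hsplit]
    rw [Matrix.mul_add, Matrix.mul_smul, Matrix.mul_smul, Matrix.mul_one,
      Matrix.add_mul, Matrix.smul_mul, Matrix.smul_mul, Matrix.mul_assoc, hMM,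
      Matrix.mul_one]
  refine ⟨key, fun W hW hWM => ?_⟩
  have hinv : W⁻¹ * (W⁻¹)ᵀ = M⁻¹ := by
    rw [← hWM, Matrix.mul_inv_rev, ← Matrix.transpose_nonsing_inv]
  rw [key, Matrix.mul_assoc, hinv]
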